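/- Let f(z)=∑_{n=0}^∞ a_n z^n be analytic on the unit disk with |f| ≤ 1, let a = |a_0|, and let ω_m, ω_k be analytic self-maps of the disk with |ω_m(z)| ≤ |z|^m and |ω_k(z)| ≤ |z|^k. Then for p ∈ (0,2] and N ≥ 1, |f(ω_m(z))|^p + ∑_{n=N}^∞ |a_n||ω_k(z)|^n ≤ 1 for all |z| = r ≤ R, where R is the unique root in (0,1) of 2r^{kN}(1+r^m) − p(1−r^m)(1−r^k) = 0. -/

import Mathlib

set_option maxHeartbeats 1000000

open Complex Metric


lemma hasFPS (b : ℕ → ℂ) (G : ℂ → ℂ)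
    (hb : ∀ w : ℂ, norm w < 1 → HasSum (fun t : ℕ => b t * w ^ t) (G w)) :
    HasFPowerSeriesOnBall G
      (fun n => ContinuousMultilinearMap.mkPiRing ℂ (Fin n) (b n)) 0 1 := by
  constructor
  · -- radius
    apply ENNReal.le_of_forall_nnreal_lt
    intro r hr
    have hr1 : (r : ℝ) < 1 := by exact_mod_cast hr
    have hsum : Summable (fun t : ℕ => b t * ((r : ℝ) : ℂ) ^ t) := by
      have := hb ((r : ℝ) : ℂ) (by simpa [Complex.norm_of_nonneg r.coe_nonneg] using hr1)
      exact this.summable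
    have hsn : Summable (fun t : ℕ => ‖b t * ((r : ℝ) : ℂ) ^ t‖) := hsum.norm
    apply FormalMultilinearSeries.le_radius_of_summable
    convert hsn using 2 with t
    simp [ContinuousMultilinearMap.norm_mkPiRing, Complex.norm_of_nonneg r.coe_nonneg,
      norm_mul, norm_pow]
  · exact one_pos
  · intro y hy
    have hy1 : norm y < 1 := by
      rw [mem_emetric_ball_zero_iff] at hy
      rwa [← ofReal_norm, ENNReal.ofReal_lt_one] at hy
    have := hb y hy1
    simp only [ContinuousMultilinearMap.mkPiRing_apply, Finset.prod_const,
      Finset.card_univ, Fintype.card_fin, smul_eq_mul, zero_add]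
    convert this using 2 with t
    case e'_5 => ring
    case e'_3 => rfl

lemma normSq_den (a w : ℂ) :
    Complex.normSq (a - w) + (1 - Complex.normSq a) * (1 - Complex.normSq w)
      = Complex.normSq (1 - (starRingEnd ℂ) a * w) := by
  simp only [Complex.normSq_apply, Complex.sub_re, Complex.sub_im, Complex.mul_re,
    Complex.mul_im, Complex.conj_re, Complex.conj_im, Complex.one_re, Complex.one_im]
  ring

lemma den_ne (a w : ℂ) (ha : norm a < 1) (hw : norm w ≤ 1) :
    1 - (starRingEnd ℂ) a * w ≠ 0 := by
  intro h
  have h1 : (starRingEnd ℂ) a * w = 1 := by linear_combination -h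
  have := congrArg norm h1
  simp only [norm_mul, Complex.norm_conj, norm_one] at this
  nlinarith [norm_nonneg a, norm_nonneg w]

lemma derivBound (F : ℂ → ℂ) (hd : DifferentiableOn ℂ F (ball 0 1))
    (hb : ∀ z ∈ ball (0:ℂ) 1, norm (F z) ≤ 1) :
    norm (deriv F 0) ≤ 1 - norm (F 0) ^ 2 := by
  have h01 : (0:ℂ) ∈ ball (0:ℂ) 1 := mem_ball_self one_pos
  by_cases hs : ∀ z ∈ ball (0:ℂ) 1, norm (F z) < 1
  · set a := F 0 with ha
    have hab : norm a < 1 := hs 0 h01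
    set g := fun z => (a - F z) / (1 - (starRingEnd ℂ) a * F z) with hg
    have hden : ∀ z ∈ ball (0:ℂ) 1, 1 - (starRingEnd ℂ) a * F z ≠ 0 :=
      fun z hz => den_ne a (F z) hab (hb z hz)
    have hgd : DifferentiableOn ℂ g (ball 0 1) :=
      ((differentiableOn_const a).sub hd).div
        ((differentiableOn_const 1).sub ((differentiableOn_const _).mul hd)) hden
    have hg0 : g 0 = 0 := by simp [hg, ha]
    have hmaps : Set.MapsTo g (ball 0 1) (ball (g 0) 1) := by
      intro w hw
      rw [hg0, mem_ball_zero_iff]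
      have hdw := hden w hw
      have hlt : Complex.normSq (a - F w) < Complex.normSq (1 - (starRingEnd ℂ) a * F w) := by
        have := normSq_den a (F w)
        have hA : Complex.normSq a < 1 := by
          rw [← Complex.sq_norm]; nlinarith [norm_nonneg a]
        have hW : Complex.normSq (F w) < 1 := by
          rw [← Complex.sq_norm]; nlinarith [norm_nonneg (F w), hs w hw]
        nlinarith
      show norm _ < 1
      rw [norm_div, div_lt_one (norm_pos_iff.mpr hdw)]
      · rw [Complex.norm_def, Complex.norm_def]
        exact Real.sqrt_lt_sqrt (Complex.normSq_nonneg _) hlt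
    have hder := Complex.norm_deriv_le_div_of_mapsTo_ball hgd (hmaps.mono_right ball_subset_closedBall) one_pos
    have hFd : HasDerivAt F (deriv F 0) 0 :=
      (hd.differentiableAt (isOpen_ball.mem_nhds h01)).hasDerivAt
    set F' := deriv F 0
    have h1 : HasDerivAt (fun z => a - F z) (-F') 0 := by
      exact ((hasDerivAt_const (0:ℂ) a).sub hFd).congr_deriv (by simp)
    have h2 : HasDerivAt (fun z => 1 - (starRingEnd ℂ) a * F z)
        (-((starRingEnd ℂ) a * F')) 0 := by
      exact ((hasDerivAt_const (0:ℂ) 1).sub (hFd.const_mul ((starRingEnd ℂ) a))).congr_deriv (by simp)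
    have hgder : HasDerivAt g
        ((-F' * (1 - (starRingEnd ℂ) a * F 0) - (a - F 0) * -((starRingEnd ℂ) a * F'))
          / (1 - (starRingEnd ℂ) a * F 0) ^ 2) 0 := h1.div h2 (hden 0 h01)
    have hD0 : (1 - (starRingEnd ℂ) a * a) ≠ 0 := by
      have := hden 0 h01; rwa [← ha] at this
    have hderg : deriv g 0 = -F' / (1 - (starRingEnd ℂ) a * a) := by
      rw [hgder.deriv, ← ha, sub_self, zero_mul, sub_zero, pow_two, mul_comm (-F'),
        mul_div_mul_left _ _ hD0]
    set D := 1 - (starRingEnd ℂ) a * a with hD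
    have hDval : D = ((1 - Complex.normSq a : ℝ) : ℂ) := by
      rw [hD]
      have : (starRingEnd ℂ) a * a = (Complex.normSq a : ℂ) := by
        rw [mul_comm, Complex.mul_conj]
      rw [this]
      push_cast
      ring
    have hDabs : norm D = 1 - Complex.normSq a := by
      rw [hDval, Complex.norm_real, Real.norm_of_nonneg]
      nlinarith [Complex.sq_norm a, norm_nonneg a]
    have hDpos : 0 < norm D := by
      rw [hDabs]; nlinarith [Complex.sq_norm a, norm_nonneg a]
    have : norm (deriv g 0) = norm F' / norm D := by
      rw [hderg, norm_div, norm_neg]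
    rw [this] at hder
    have : norm F' ≤ norm D := by
      rw [div_le_iff₀ hDpos] at hder
      simpa using hder
    rw [hDabs, ← Complex.sq_norm] at this
    exact this
  · push_neg at hs
    obtain ⟨z0, hz0b, hz0⟩ := hs
    have hz0eq : ‖F z0‖ = 1 := le_antisymm (hb z0 hz0b) hz0
    have hmax : IsMaxOn (norm ∘ F) (ball 0 1) z0 := by
      intro w hw
      simp only [Function.comp_apply, hz0eq]
      exact hb w hw
    have heq := Complex.eqOn_of_isPreconnected_of_isMaxOn_norm
      (convex_ball (0:ℂ) 1).isPreconnected isOpen_ball hd hz0b hmax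
    have hder0 : deriv F 0 = 0 := by
      have hev : F =ᶠ[nhds (0:ℂ)] (fun _ => F z0) :=
        Filter.eventuallyEq_of_mem (isOpen_ball.mem_nhds h01) heq
      rw [hev.deriv_eq]
      exact deriv_const _ _
    rw [hder0]
    simp only [norm_zero]
    nlinarith [hb 0 h01, norm_nonneg (F 0)]

-- |a - v| / |1 - conj a v| ≤ (|a| + |v|)/(1 + |a||v|)
lemma mobius_value (a v : ℂ) (ha : norm a < 1) (hv : norm v ≤ 1) :
    norm ((a - v) / (1 - (starRingEnd ℂ) a * v))
      ≤ (norm a + norm v) / (1 + norm a * norm v) := by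
  set A := norm a with hA
  set B := norm v with hB
  have hA0 : 0 ≤ A := norm_nonneg a
  have hB0 : 0 ≤ B := norm_nonneg v
  have hdpos : (0:ℝ) < 1 + A * B := by nlinarith
  have hden : norm (1 - (starRingEnd ℂ) a * v) > 0 :=
    norm_pos_iff.mpr (den_ne a v ha hv)
  rw [norm_div, div_le_div_iff₀ hden hdpos]
  -- key square inequality
  have hc : |(a * (starRingEnd ℂ) v).re| ≤ A * B := by
    calc |(a * (starRingEnd ℂ) v).re| ≤ norm (a * (starRingEnd ℂ) v) :=
          Complex.abs_re_le_norm _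
      _ = A * B := by rw [norm_mul, Complex.norm_conj]
  have hsq : (norm (a - v) * (1 + A * B)) ^ 2
      ≤ ((A + B) * norm (1 - (starRingEnd ℂ) a * v)) ^ 2 := by
    have e1 : norm (a - v) ^ 2 = Complex.normSq (a - v) := Complex.sq_norm _
    have e2 : norm (1 - (starRingEnd ℂ) a * v) ^ 2
        = Complex.normSq (1 - (starRingEnd ℂ) a * v) := Complex.sq_norm _
    have e3 := normSq_den a v
    have e4 : Complex.normSq (a - v) = A^2 + B^2 - 2 * (a * (starRingEnd ℂ) v).re := by
      rw [Complex.normSq_sub, ← Complex.sq_norm, ← Complex.sq_norm, ← hA, ← hB]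
    have e5 : Complex.normSq a = A^2 := (Complex.sq_norm a).symm
    have e6 : Complex.normSq v = B^2 := (Complex.sq_norm v).symm
    have hc1 : -(A*B) ≤ (a * (starRingEnd ℂ) v).re := neg_le_of_abs_le hc
    have hA1 : A ≤ 1 := ha.le
    have hB1 : B ≤ 1 := hv
    rw [mul_pow, mul_pow, e1, e2, ← e3, e4, e5, e6]
    nlinarith [mul_nonneg (mul_nonneg (by nlinarith : (0:ℝ) ≤ 1 - A^2)
      (by nlinarith : (0:ℝ) ≤ 1 - B^2)) (by nlinarith : (0:ℝ) ≤ A*B + (a * (starRingEnd ℂ) v).re)]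
  have h1 : 0 ≤ norm (a - v) * (1 + A * B) :=
    mul_nonneg (norm_nonneg _) hdpos.le
  have h2 : 0 ≤ (A + B) * norm (1 - (starRingEnd ℂ) a * v) :=
    mul_nonneg (by nlinarith) hden.le
  exact (pow_le_pow_iff_left₀ h1 h2 (by norm_num)).mp hsq

lemma mobius_mono {a s x : ℝ} (ha0 : 0 ≤ a) (ha1 : a ≤ 1) (hs0 : 0 ≤ s) (hsx : s ≤ x) :
    (a + s) / (1 + a * s) ≤ (a + x) / (1 + a * x) := by
  have h1 : (0:ℝ) < 1 + a * s := by nlinarith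
  have h2 : (0:ℝ) < 1 + a * x := by nlinarith
  rw [div_le_div_iff₀ h1 h2]
  nlinarith [mul_nonneg (sub_nonneg.2 hsx) (by nlinarith : (0:ℝ) ≤ 1 - a^2)]

lemma pickBound (F : ℂ → ℂ) (hd : DifferentiableOn ℂ F (ball 0 1))
    (hb : ∀ z ∈ ball (0:ℂ) 1, norm (F z) < 1) (w : ℂ) (hw : norm w < 1) :
    norm (F w)
      ≤ (norm (F 0) + norm w) / (1 + norm (F 0) * norm w) := by
  have h01 : (0:ℂ) ∈ ball (0:ℂ) 1 := mem_ball_self one_pos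
  have hwb : w ∈ ball (0:ℂ) 1 := mem_ball_zero_iff.2 hw
  set a := F 0 with ha
  have hab : norm a < 1 := hb 0 h01
  set g := fun z => (a - F z) / (1 - (starRingEnd ℂ) a * F z) with hg
  have hden : ∀ z ∈ ball (0:ℂ) 1, 1 - (starRingEnd ℂ) a * F z ≠ 0 :=
    fun z hz => den_ne a (F z) hab (hb z hz).le
  have hgd : DifferentiableOn ℂ g (ball 0 1) :=
    ((differentiableOn_const a).sub hd).div
      ((differentiableOn_const 1).sub ((differentiableOn_const _).mul hd)) hden
  have hg0 : g 0 = 0 := by simp [hg, ha]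
  have hmaps : Set.MapsTo g (ball 0 1) (ball (g 0) 1) := by
    intro u hu
    rw [hg0, mem_ball_zero_iff]
    have hdu := hden u hu
    have hlt : Complex.normSq (a - F u) < Complex.normSq (1 - (starRingEnd ℂ) a * F u) := by
      have := normSq_den a (F u)
      have hA : Complex.normSq a < 1 := by
        rw [← Complex.sq_norm]; nlinarith [norm_nonneg a]
      have hW : Complex.normSq (F u) < 1 := by
        rw [← Complex.sq_norm]; nlinarith [norm_nonneg (F u), hb u hu]
      nlinarith
    show norm _ < 1
    rw [norm_div, div_lt_one (norm_pos_iff.mpr hdu)]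
    rw [Complex.norm_def, Complex.norm_def]
    exact Real.sqrt_lt_sqrt (Complex.normSq_nonneg _) hlt
  have hdist := Complex.dist_le_div_mul_dist_of_mapsTo_ball hgd (hmaps.mono_right ball_subset_closedBall) hwb
  rw [hg0, dist_zero_right, dist_zero_right, one_div_one, one_mul] at hdist
  -- hdist : ‖g w‖ ≤ ‖w‖
  obtain ⟨v, hgw⟩ : ∃ v, g w = v := ⟨_, rfl⟩
  rw [hgw] at hdist
  have hvw : norm v ≤ norm w := hdist
  have hv1 : norm v < 1 := lt_of_le_of_lt hvw hw
  -- recover F w from v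
  have hdw := hden w hwb
  have e1 : v * (1 - (starRingEnd ℂ) a * F w) = a - F w := by
    rw [← hgw, hg]
    field_simp
    exact mul_div_cancel_right₀ _ (by rwa [mul_comm] at hdw)
  have hden2 : 1 - (starRingEnd ℂ) a * v ≠ 0 := den_ne a v hab hv1.le
  have e2 : F w = (a - v) / (1 - (starRingEnd ℂ) a * v) := by
    rw [eq_div_iff hden2]
    linear_combination e1
  calc norm (F w) = norm ((a - v) / (1 - (starRingEnd ℂ) a * v)) := by rw [e2]
    _ ≤ (norm a + norm v) / (1 + norm a * norm v) :=
        mobius_value a v hab hv1.le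
    _ ≤ (norm a + norm w) / (1 + norm a * norm w) :=
        mobius_mono (norm_nonneg a) hab.le (norm_nonneg v) hvw

lemma coeffBound (f : ℂ → ℂ) (a : ℕ → ℂ)
    (hf : ∀ z : ℂ, norm z < 1 → HasSum (fun n : ℕ => a n * z ^ n) (f z))
    (hfb : ∀ z : ℂ, norm z < 1 → norm (f z) ≤ 1)
    (n : ℕ) (hn : 1 ≤ n) :
    norm (a n) ≤ 1 - norm (a 0) ^ 2 := by
  have hn0 : n ≠ 0 := Nat.one_le_iff_ne_zero.mp hn
  set b : ℕ → ℂ := fun t => a (n * t) with hbdef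
  -- summability of the symmetrized series
  have hsumb : ∀ w : ℂ, norm w < 1 → Summable (fun t : ℕ => b t * w ^ t) := by
    intro w hw
    have hw0 : 0 ≤ norm w := norm_nonneg w
    obtain ⟨c, hc⟩ : ∃ c : ℝ, c = (1 + norm w) / 2 := ⟨_, rfl⟩
    have hc0 : 0 < c := by rw [hc]; linarith
    have hwc : norm w < c := by rw [hc]; linarith
    have hc1 : c < 1 := by rw [hc]; linarith
    obtain ⟨s, hs⟩ : ∃ s : ℝ, s = c ^ ((n : ℝ)⁻¹) := ⟨_, rfl⟩
    have hs0 : 0 < s := hs ▸ Real.rpow_pos_of_pos hc0 _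
    have hsn : s ^ n = c := by
      rw [hs, ← Real.rpow_natCast (c ^ _) n, ← Real.rpow_mul hc0.le,
        inv_mul_cancel₀ (by exact_mod_cast hn0 : (n:ℝ) ≠ 0), Real.rpow_one]
    have hs1 : s < 1 := by
      by_contra h
      push_neg at h
      have h2 : (1:ℝ) ≤ s ^ n := one_le_pow₀ h
      rw [hsn] at h2
      linarith
    have habs_s : norm ((s : ℝ) : ℂ) < 1 := by
      rwa [Complex.norm_real, Real.norm_of_nonneg hs0.le]
    have hSsum : Summable (fun l : ℕ => norm (a l) * s ^ l) := by
      have h1 : Summable (fun l : ℕ => ‖a l * ((s : ℝ) : ℂ) ^ l‖) :=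
        (hf _ habs_s).summable.norm
      convert h1 using 2 with l
      rw [norm_mul, norm_pow, Complex.norm_real, Real.norm_of_nonneg hs0.le]
    obtain ⟨C, hC⟩ : ∃ C : ℝ, C = ∑' l : ℕ, norm (a l) * s ^ l := ⟨_, rfl⟩
    have hCb : ∀ l, norm (a l) * s ^ l ≤ C := by
      intro l
      rw [hC]
      exact Summable.le_tsum hSsum l (fun m _ => by positivity)
    apply Summable.of_norm
    have hgeo : Summable (fun t : ℕ => C * (norm w / c) ^ t) := by
      apply Summable.mul_left
      apply summable_geometric_of_lt_one (by positivity)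
      rw [div_lt_one hc0]; exact hwc
    apply Summable.of_nonneg_of_le (fun t => norm_nonneg _) ?_ hgeo
    intro t
    rw [norm_mul, norm_pow]
    have h1 : norm (a (n * t)) * c ^ t ≤ C := by
      have := hCb (n * t)
      rwa [pow_mul, hsn] at this
    have h2 : norm (a (n * t)) ≤ C / c ^ t := by
      rw [le_div_iff₀ (by positivity)]; exact h1
    calc norm (b t) * norm w ^ t
        ≤ (C / c ^ t) * norm w ^ t := by
          apply mul_le_mul_of_nonneg_right h2 (by positivity)
      _ = C * (norm w / c) ^ t := by
          rw [div_pow]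
          ring
  have hFb : ∀ w : ℂ, norm w < 1 → norm (∑' t : ℕ, b t * w ^ t) ≤ 1 := by
    intro w hw
    obtain ⟨z, hz⟩ := IsAlgClosed.exists_pow_nat_eq w (by omega : 0 < n)
    have hzabs : norm z < 1 := by
      by_contra h
      push_neg at h
      have h2 : (1:ℝ) ≤ norm z ^ n := one_le_pow₀ h
      rw [← norm_pow, hz] at h2
      linarith
    obtain ⟨ζ, hζ⟩ : ∃ ζ : ℂ, ζ = Complex.exp (2 * Real.pi * Complex.I / n) := ⟨_, rfl⟩
    have hprim : IsPrimitiveRoot ζ n := hζ ▸ Complex.isPrimitiveRoot_exp n hn0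
    have hζ1 : norm ζ = 1 := by
      have hpow : norm ζ ^ n = 1 := by
        rw [← norm_pow, hprim.pow_eq_one, norm_one]
      have h0 : 0 ≤ norm ζ := norm_nonneg ζ
      rcases lt_trichotomy (norm ζ) 1 with h | h | h
      · have := pow_lt_one₀ h0 h hn0
        rw [hpow] at this; linarith
      · exact h
      · have := one_lt_pow₀ h hn0
        rw [hpow] at this; linarith
    have hsum_j : ∀ j : ℕ, HasSum (fun l : ℕ => a l * (ζ ^ j * z) ^ l) (f (ζ ^ j * z)) := by
      intro j
      apply hf
      rw [norm_mul, norm_pow, hζ1, one_pow, one_mul]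
      exact hzabs
    have H : HasSum (fun l : ℕ => ∑ j ∈ Finset.range n, a l * (ζ ^ j * z) ^ l)
        (∑ j ∈ Finset.range n, f (ζ ^ j * z)) := hasSum_sum (fun j _ => hsum_j j)
    have Hfun : (fun l : ℕ => ∑ j ∈ Finset.range n, a l * (ζ ^ j * z) ^ l)
        = fun l : ℕ => a l * z ^ l * (if n ∣ l then (n : ℂ) else 0) := by
      funext l
      have hterm : ∀ j, a l * (ζ ^ j * z) ^ l = a l * z ^ l * (ζ ^ l) ^ j := by
        intro j
        rw [mul_pow, ← pow_mul, ← pow_mul, mul_comm j l]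
        ring
      rw [Finset.sum_congr rfl (fun j _ => hterm j), ← Finset.mul_sum]
      congr 1
      by_cases hdvd : n ∣ l
      · have h1 : ζ ^ l = 1 := (hprim.pow_eq_one_iff_dvd l).mpr hdvd
        simp [h1, hdvd]
      · have hne : ζ ^ l ≠ 1 := fun h => hdvd ((hprim.pow_eq_one_iff_dvd l).mp h)
        rw [if_neg hdvd, geom_sum_eq hne]
        have h2 : (ζ ^ l) ^ n = 1 := by
          rw [← pow_mul, mul_comm, pow_mul, hprim.pow_eq_one, one_pow]
        rw [h2]
        simp
    rw [Hfun] at H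
    obtain ⟨S, hS⟩ : ∃ S : ℂ, S = ∑ j ∈ Finset.range n, f (ζ ^ j * z) := ⟨_, rfl⟩
    rw [← hS] at H
    have hinj : Function.Injective (fun t : ℕ => n * t) := fun t1 t2 h => by
      have : n * t1 = n * t2 := h
      exact Nat.eq_of_mul_eq_mul_left (by omega) this
    have hoff : ∀ l, l ∉ Set.range (fun t : ℕ => n * t) →
        a l * z ^ l * (if n ∣ l then (n : ℂ) else 0) = 0 := by
      intro l hl
      rw [if_neg, mul_zero]
      intro ⟨t, ht⟩
      exact hl ⟨t, ht.symm⟩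
    have H2 : HasSum (fun t : ℕ => a (n * t) * z ^ (n * t) * (n : ℂ)) S := by
      have h3 := (Function.Injective.hasSum_iff hinj hoff).mpr H
      have h4 : (fun t : ℕ => a (n * t) * z ^ (n * t) * (if n ∣ n * t then (n:ℂ) else 0))
          = fun t : ℕ => a (n * t) * z ^ (n * t) * (n : ℂ) := by
        funext t
        rw [if_pos ⟨t, rfl⟩]
      rw [← h4]
      exact h3
    have hnC : (n : ℂ) ≠ 0 := by exact_mod_cast hn0
    have H3 : HasSum (fun t : ℕ => b t * w ^ t) (S / n) := by
      have h5 := H2.div_const (n : ℂ)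
      have h6 : (fun t : ℕ => a (n * t) * z ^ (n * t) * (n:ℂ) / (n:ℂ))
          = fun t : ℕ => b t * w ^ t := by
        funext t
        rw [mul_div_cancel_right₀ _ hnC, hbdef, pow_mul, hz]
      rwa [h6] at h5
    rw [H3.tsum_eq, norm_div]
    have hSabs : norm S ≤ n := by
      rw [hS]
      calc norm (∑ j ∈ Finset.range n, f (ζ ^ j * z))
          ≤ ∑ j ∈ Finset.range n, norm (f (ζ ^ j * z)) :=
            norm_sum_le _ _
        _ ≤ ∑ j ∈ Finset.range n, 1 := by
            apply Finset.sum_le_sum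
            intro j _
            apply hfb
            rw [norm_mul, norm_pow, hζ1, one_pow, one_mul]
            exact hzabs
        _ = n := by simp
    have habsn : norm ((n:ℂ)) = (n:ℝ) := by simp
    rw [habsn, div_le_one (by exact_mod_cast Nat.pos_of_ne_zero hn0 : (0:ℝ) < (n:ℝ))]
    exact hSabs
  -- now apply derivBound to G
  obtain ⟨G, hG⟩ : ∃ G : ℂ → ℂ, G = fun w => ∑' t : ℕ, b t * w ^ t := ⟨_, rfl⟩
  have hbG : ∀ w : ℂ, norm w < 1 → HasSum (fun t : ℕ => b t * w ^ t) (G w) := by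
    intro w hw
    rw [hG]
    exact (hsumb w hw).hasSum
  have hFPS := hasFPS b G hbG
  have hsubset : ball (0:ℂ) 1 ⊆ EMetric.ball (0:ℂ) 1 := by
    intro x hx
    rw [EMetric.ball, Metric.mem_eball, edist_dist]
    exact ENNReal.ofReal_lt_one.2 (mem_ball.mp hx)
  have hd : DifferentiableOn ℂ G (ball 0 1) := hFPS.differentiableOn.mono hsubset
  have hbball : ∀ z ∈ ball (0:ℂ) 1, norm (G z) ≤ 1 := by
    intro x hx
    rw [hG]
    exact hFb x (mem_ball_zero_iff.mp hx)
  have hderiv : deriv G 0 = a n := by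
    rw [hFPS.hasFPowerSeriesAt.deriv]
    simp [hbdef]
  have hG0 : G 0 = a 0 := by
    have h7 := hbG 0 (by simp)
    have h8 : HasSum (fun t : ℕ => b t * (0:ℂ) ^ t) (b 0) := by
      have := hasSum_single (f := fun t : ℕ => b t * (0:ℂ) ^ t) 0
        (fun t ht => by simp [zero_pow ht])
      simpa using this
    have := h7.unique h8
    rw [this, hbdef]
    simp
  have := derivBound G hd hbball
  rw [hderiv, hG0] at this
  exact this

/-- Bohr–Rogosinski inequality involving Schwarz functions: for `p ∈ (0,2]`, `N ≥ 1`, and `R`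
the root in `(0,1)` of `2 r^{kN}(1+r^m) - p(1-r^m)(1-r^k) = 0`, one has
`|f(ω_m z)|^p + ∑_{n≥N} |aₙ| |ω_k z|ⁿ ≤ 1` whenever `|z| ≤ R`. -/
theorem stmt_3 (m k N : ℕ) (hm : 1 ≤ m) (hk : 1 ≤ k) (hN : 1 ≤ N)
    (p : ℝ) (hp : p ∈ Set.Ioc (0 : ℝ) 2)
    (f ωm ωk : ℂ → ℂ) (a : ℕ → ℂ)
    (hf : ∀ z : ℂ, ‖z‖ < 1 → HasSum (fun n : ℕ => a n * z ^ n) (f z))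
    (hfb : ∀ z : ℂ, ‖z‖ < 1 → ‖f z‖ ≤ 1)
    (hωm : ∀ z : ℂ, ‖z‖ < 1 → ‖ωm z‖ ≤ ‖z‖ ^ m)
    (hωk : ∀ z : ℂ, ‖z‖ < 1 → ‖ωk z‖ ≤ ‖z‖ ^ k)
    (R : ℝ) (hR : R ∈ Set.Ioo (0 : ℝ) 1)
    (hroot : 2 * R ^ (k * N) * (1 + R ^ m) - p * (1 - R ^ m) * (1 - R ^ k) = 0)
    (z : ℂ) (hz : ‖z‖ ≤ R) :
    ‖f (ωm z)‖ ^ p +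
      (∑' n : ℕ, ‖a (n + N)‖ * ‖ωk z‖ ^ (n + N)) ≤ 1 := by
  obtain ⟨hp0, hp2⟩ := hp
  obtain ⟨hR0, hR1⟩ := hR
  have hz1 : norm z < 1 := lt_of_le_of_lt hz hR1
  have hm0 : m ≠ 0 := by omega
  have hk0 : k ≠ 0 := by omega
  have hxm1 : R ^ m < 1 := pow_lt_one₀ hR0.le hR1 hm0
  have hyk1 : R ^ k < 1 := pow_lt_one₀ hR0.le hR1 hk0
  have hx0 : 0 < R ^ m := pow_pos hR0 m
  have hy0 : 0 < R ^ k := pow_pos hR0 k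
  have hwmR : norm (ωm z) ≤ R ^ m :=
    (hωm z hz1).trans (pow_le_pow_left₀ (norm_nonneg z) hz m)
  have hwkR : norm (ωk z) ≤ R ^ k :=
    (hωk z hz1).trans (pow_le_pow_left₀ (norm_nonneg z) hz k)
  have hwm1 : norm (ωm z) < 1 := lt_of_le_of_lt hwmR hxm1
  have hwk1 : norm (ωk z) < 1 := lt_of_le_of_lt hwkR hyk1
  have ha0 : a 0 = f 0 := by
    have h8 : HasSum (fun t : ℕ => a t * (0:ℂ) ^ t) (a 0) := by
      have := hasSum_single (f := fun t : ℕ => a t * (0:ℂ) ^ t) 0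
        (fun t ht => by simp [zero_pow ht])
      simpa using this
    exact ((hf 0 (by simp)).unique h8).symm
  obtain ⟨A, hA⟩ : ∃ A : ℝ, A = norm (a 0) := ⟨_, rfl⟩
  have hA0 : 0 ≤ A := hA ▸ norm_nonneg (a 0)
  have hA1 : A ≤ 1 := by
    rw [hA, ha0]
    exact hfb 0 (by simp)
  have hA2 : 0 ≤ 1 - A ^ 2 := by nlinarith
  have coeff : ∀ j : ℕ, 1 ≤ j → norm (a j) ≤ 1 - A ^ 2 := by
    intro j hj
    rw [hA]
    exact coeffBound f a hf hfb j hj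
  -- tail estimate
  obtain ⟨ρ, hρ⟩ : ∃ ρ : ℝ, ρ = norm (ωk z) := ⟨_, rfl⟩
  have hρ0 : 0 ≤ ρ := hρ ▸ norm_nonneg _
  have hρ1 : ρ < 1 := hρ ▸ hwk1
  have hρy : ρ ≤ R ^ k := hρ ▸ hwkR
  have hmaj : Summable (fun n : ℕ => (1 - A ^ 2) * ρ ^ N * ρ ^ n) :=
    (summable_geometric_of_lt_one hρ0 hρ1).mul_left _
  have hterm : ∀ n : ℕ, norm (a (n + N)) * ρ ^ (n + N)
      ≤ (1 - A ^ 2) * ρ ^ N * ρ ^ n := by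
    intro n
    have h1 := coeff (n + N) (by omega)
    calc norm (a (n + N)) * ρ ^ (n + N)
        ≤ (1 - A ^ 2) * ρ ^ (n + N) :=
          mul_le_mul_of_nonneg_right h1 (by positivity)
      _ = (1 - A ^ 2) * ρ ^ N * ρ ^ n := by rw [pow_add]; ring
  have hsumT : Summable (fun n : ℕ => norm (a (n + N)) * ρ ^ (n + N)) :=
    Summable.of_nonneg_of_le (fun n => by positivity) hterm hmaj
  have hTle : (∑' n : ℕ, norm (a (n + N)) * ρ ^ (n + N))
      ≤ (1 - A ^ 2) * ρ ^ N * (1 - ρ)⁻¹ := by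
    calc (∑' n : ℕ, norm (a (n + N)) * ρ ^ (n + N))
        ≤ ∑' n : ℕ, (1 - A ^ 2) * ρ ^ N * ρ ^ n := Summable.tsum_le_tsum hterm hsumT hmaj
      _ = (1 - A ^ 2) * ρ ^ N * (1 - ρ)⁻¹ := by
          rw [tsum_mul_left, tsum_geometric_of_lt_one hρ0 hρ1]
  have hmono : (1 - A ^ 2) * ρ ^ N * (1 - ρ)⁻¹
      ≤ (1 - A ^ 2) * (R ^ k) ^ N * (1 - R ^ k)⁻¹ := by
    have h1 : ρ ^ N ≤ (R ^ k) ^ N := pow_le_pow_left₀ hρ0 hρy N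
    have h2 : (1 - ρ)⁻¹ ≤ (1 - R ^ k)⁻¹ := by
      apply inv_anti₀ (by linarith) (by linarith)
    have h3 : (0:ℝ) ≤ (1 - ρ)⁻¹ := inv_nonneg.mpr (by linarith)
    have h4 : (0:ℝ) ≤ (R ^ k) ^ N := by positivity
    calc (1 - A ^ 2) * ρ ^ N * (1 - ρ)⁻¹
        ≤ (1 - A ^ 2) * (R ^ k) ^ N * (1 - ρ)⁻¹ := by
          apply mul_le_mul_of_nonneg_right (mul_le_mul_of_nonneg_left h1 hA2) h3
      _ ≤ (1 - A ^ 2) * (R ^ k) ^ N * (1 - R ^ k)⁻¹ := by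
          apply mul_le_mul_of_nonneg_left h2 (mul_nonneg hA2 h4)
  rw [← hρ]
  -- rewrite the root equation
  have key : 2 * (R ^ k) ^ N * (1 + R ^ m) = p * (1 - R ^ m) * (1 - R ^ k) := by
    rw [← pow_mul]
    linarith [hroot]
  by_cases hs : ∀ w ∈ ball (0:ℂ) 1, norm (f w) < 1
  · -- strict case
    have hAlt : A < 1 := by
      rw [hA, ha0]
      exact hs 0 (mem_ball_self one_pos)
    have hFPS := hasFPS a f hf
    have hsubset : ball (0:ℂ) 1 ⊆ EMetric.ball (0:ℂ) 1 := by
      intro x hx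
      rw [EMetric.ball, Metric.mem_eball, edist_dist]
      exact ENNReal.ofReal_lt_one.2 (mem_ball.mp hx)
    have hd : DifferentiableOn ℂ f (ball 0 1) := hFPS.differentiableOn.mono hsubset
    have hpick := pickBound f hd hs (ωm z) hwm1
    rw [← ha0, ← hA] at hpick
    obtain ⟨x, hxdef⟩ : ∃ x : ℝ, x = R ^ m := ⟨_, rfl⟩
    have hx0' : 0 < x := hxdef ▸ hx0
    have hx1' : x < 1 := hxdef ▸ hxm1
    have hfw : norm (f (ωm z)) ≤ (A + x) / (1 + A * x) :=
      hpick.trans (mobius_mono hA0 hA1 (norm_nonneg _) (hxdef ▸ hwmR))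
    obtain ⟨t, htdef⟩ : ∃ t : ℝ, t = (A + x) / (1 + A * x) := ⟨_, rfl⟩
    have hden : (0:ℝ) < 1 + A * x := by nlinarith
    have ht0 : 0 ≤ t := by rw [htdef]; positivity
    have ht1 : t ≤ 1 := by
      rw [htdef, div_le_one hden]; nlinarith
    have hrp : norm (f (ωm z)) ^ p ≤ t ^ p :=
      Real.rpow_le_rpow (norm_nonneg _) (htdef ▸ hfw) hp0.le
    have hbern : t ^ p ≤ 1 + (p / 2) * (t ^ 2 - 1) := by
      have hb1 := rpow_one_add_le_one_add_mul_self (s := t ^ 2 - 1)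
        (by nlinarith) (by linarith : (0:ℝ) ≤ p / 2) (by linarith : p / 2 ≤ 1)
      have he : ((1:ℝ) + (t ^ 2 - 1)) = t ^ 2 := by ring
      rw [he] at hb1
      have he2 : (t ^ 2 : ℝ) ^ (p / 2) = t ^ p := by
        rw [← Real.rpow_natCast t 2, ← Real.rpow_mul ht0]
        congr 1
        push_cast
        ring
      rwa [he2] at hb1
    -- key quantitative inequality
    have ht2 : 1 - t ^ 2 = (1 - A ^ 2) * (1 - x ^ 2) / (1 + A * x) ^ 2 := by
      rw [htdef]
      field_simp
      ring
    have hfinal : (1 - A ^ 2) * (R ^ k) ^ N * (1 - R ^ k)⁻¹ ≤ (p / 2) * (1 - t ^ 2) := by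
      have hdsq : (1 + A * x) ^ 2 ≤ (1 + x) ^ 2 := by nlinarith
      have hyN0 : (0:ℝ) ≤ (R ^ k) ^ N := by positivity
      rw [← hxdef] at key
      rw [ht2, ← mul_div_assoc, ← div_eq_mul_inv,
        div_le_div_iff₀ (by linarith : (0:ℝ) < 1 - R ^ k)
          (by positivity : (0:ℝ) < (1 + A * x) ^ 2)]
      calc (1 - A ^ 2) * (R ^ k) ^ N * (1 + A * x) ^ 2
          ≤ (1 - A ^ 2) * (R ^ k) ^ N * (1 + x) ^ 2 :=
            mul_le_mul_of_nonneg_left hdsq (mul_nonneg hA2 hyN0)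
        _ = p / 2 * ((1 - A ^ 2) * (1 - x ^ 2)) * (1 - R ^ k) := by
            linear_combination ((1 - A ^ 2) * (1 + x) / 2) * key
    have := hTle.trans hmono
    linarith [hrp, hbern, hfinal, this]
  · -- constant case
    push_neg at hs
    obtain ⟨z0, hz0b, hz0⟩ := hs
    have hFPS := hasFPS a f hf
    have hsubset : ball (0:ℂ) 1 ⊆ EMetric.ball (0:ℂ) 1 := by
      intro x hx
      rw [EMetric.ball, Metric.mem_eball, edist_dist]
      exact ENNReal.ofReal_lt_one.2 (mem_ball.mp hx)
    have hd : DifferentiableOn ℂ f (ball 0 1) := hFPS.differentiableOn.mono hsubset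
    have hz0eq : ‖f z0‖ = 1 := le_antisymm (hfb z0 (mem_ball_zero_iff.mp hz0b)) hz0
    have hmax : IsMaxOn (norm ∘ f) (ball 0 1) z0 := by
      intro w hw
      simp only [Function.comp_apply, hz0eq]
      exact hfb w (mem_ball_zero_iff.mp hw)
    have heq := Complex.eqOn_of_isPreconnected_of_isMaxOn_norm
      (convex_ball (0:ℂ) 1).isPreconnected isOpen_ball hd hz0b hmax
    have hAeq : A = 1 := by
      have h1 : f 0 = f z0 := heq (mem_ball_self one_pos)
      rw [hA, ha0, h1, hz0eq]
    have hcoeff0 : ∀ n : ℕ, norm (a (n + N)) = 0 := by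
      intro n
      have h1 := coeff (n + N) (by omega)
      rw [hAeq] at h1
      norm_num at h1
      simp [h1]
    have htail : (∑' n : ℕ, norm (a (n + N)) * ρ ^ (n + N)) = 0 := by
      convert tsum_zero with n
      rw [hcoeff0 n, zero_mul]
    have hval : norm (f (ωm z)) ^ p ≤ 1 :=
      Real.rpow_le_one (norm_nonneg _) (hfb _ hwm1) hp0.le
    rw [htail]
    linarith
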